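/- Let K be a p-adic field, m ≥ 1, a ∈ Δ' nonzero, f = f_{m+1,a} the flow map, and fix a nonzero x ∈ 𝔭 sufficiently small. Then the orbit map φ : ℤ_p → K, φ(z) = f^{∘z}(x), satisfies |φ(z) − φ(z′)| = |a x^{m+1}| · |z − z′| for all z, z′ ∈ ℤ_p. In particular φ is a bi-Lipschitz homeomorphism onto its image. -/

import Mathlib

open IsUltrametricDist in
private lemma ultra_norm_eq_of_sub_lt {K : Type*} [NormedField K] [IsUltrametricDist K]
    {a b : K} (h : ‖a - b‖ < ‖b‖) : ‖a‖ = ‖b‖ := by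
  refine le_antisymm ?_ ?_
  · calc ‖a‖ = ‖(a - b) + b‖ := by ring_nf
    _ ≤ max ‖a - b‖ ‖b‖ := norm_add_le_max _ _
    _ ≤ ‖b‖ := max_le h.le le_rfl
  · by_contra hc
    push_neg at hc
    have : ‖b‖ ≤ max ‖a‖ ‖a - b‖ := by
      calc ‖b‖ = ‖a + -(a - b)‖ := by ring_nf
      _ ≤ max ‖a‖ ‖-(a - b)‖ := norm_add_le_max _ _
      _ = max ‖a‖ ‖a - b‖ := by rw [norm_neg]
    exact absurd this (by push_neg; exact max_lt hc h)

open IsUltrametricDist in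
private lemma ultra_mul_sub_one {K : Type*} [NormedField K] [IsUltrametricDist K]
    {u v : K} {δ : ℝ} (hu : ‖u‖ ≤ 1) (hu1 : ‖u - 1‖ ≤ δ) (hv1 : ‖v - 1‖ ≤ δ) :
    ‖u * v - 1‖ ≤ δ := by
  have : u * v - 1 = u * (v - 1) + (u - 1) := by ring
  rw [this]
  refine (norm_add_le_max _ _).trans (max_le ?_ hu1)
  calc ‖u * (v - 1)‖ = ‖u‖ * ‖v - 1‖ := norm_mul _ _
  _ ≤ 1 * δ := mul_le_mul hu hv1 (norm_nonneg _) zero_le_one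
  _ = δ := one_mul δ

/-- for the flow `f^{∘z}(x) = x / (1 - z a m x^m)^{1/m}` on a p-adic
field `K` (with the canonical Hensel `m`-th root), and `x ≠ 0` sufficiently small,
the orbit map `φ(z) = f^{∘z}(x)` satisfies
`‖φ(z) - φ(z')‖ = ‖a‖ ‖x‖^{m+1} ‖z - z'‖` for all `z, z' ∈ ℤ_p`; in particular it
is injective (a bi-Lipschitz homeomorphism onto its image). -/
theorem stmt3 {p : ℕ} [Fact p.Prime] {K : Type*} [NontriviallyNormedField K]
    [CompleteSpace K] [IsUltrametricDist K] [Algebra ℚ_[p] K]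
    (hext : ∀ x : ℚ_[p], ‖algebraMap ℚ_[p] K x‖ = ‖x‖)
    (m : ℕ) (hm : 1 ≤ m) (a : K) (ha0 : 0 < ‖a‖) (ha1 : ‖a‖ ≤ 1)
    (root : ℤ_[p] → K → K)
    (hroot : ∀ (z : ℤ_[p]) (x : K), ‖x‖ < 1 →
        (root z x) ^ m = 1 - algebraMap ℚ_[p] K (z : ℚ_[p]) * a * m * x ^ m ∧
        ‖root z x - (1 - algebraMap ℚ_[p] K (z : ℚ_[p]) * a * x ^ m)‖ ≤
          ‖(m : K) * x ^ (m + 1)‖) :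
    ∃ ε > 0, ∀ x : K, 0 < ‖x‖ → ‖x‖ < ε →
      (∀ z z' : ℤ_[p],
        ‖x / root z x - x / root z' x‖ = ‖a‖ * ‖x‖ ^ (m + 1) * ‖z - z'‖) ∧
      Function.Injective (fun z : ℤ_[p] => x / root z x) := by
  have hmK : (0 : ℝ) < ‖(m : K)‖ := by
    have h1 : (m : K) = algebraMap ℚ_[p] K (m : ℚ_[p]) := by rw [map_natCast]
    rw [h1, hext, norm_pos_iff]
    exact_mod_cast Nat.cast_ne_zero.mpr (by omega)
  have hmK1 : ‖(m : K)‖ ≤ 1 := by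
    have : ((m : ℚ_[p]) : ℚ_[p]) = ((m : ℤ) : ℚ_[p]) := by push_cast; ring
    calc ‖(m : K)‖ = ‖algebraMap ℚ_[p] K (m : ℚ_[p])‖ := by rw [map_natCast]
    _ = ‖(m : ℚ_[p])‖ := hext _
    _ ≤ 1 := by rw [this]; exact Padic.norm_int_le_one _
  refine ⟨min 1 ‖(m : K)‖, lt_min one_pos hmK, fun x hx0 hxε => ?_⟩
  have hx1 : ‖x‖ < 1 := lt_of_lt_of_le hxε (min_le_left _ _)
  have hxmK : ‖x‖ < ‖(m : K)‖ := lt_of_lt_of_le hxε (min_le_right _ _)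
  have hxm1 : ‖x‖ ^ m ≤ ‖x‖ := by
    calc ‖x‖ ^ m ≤ ‖x‖ ^ 1 := pow_le_pow_of_le_one (norm_nonneg x) hx1.le hm
    _ = ‖x‖ := pow_one _
  -- norm of coefficients
  have hcoef : ∀ z : ℤ_[p], ‖algebraMap ℚ_[p] K (z : ℚ_[p])‖ ≤ 1 := fun z => by
    rw [hext]; exact z.2
  -- the root is close to 1
  have hr1 : ∀ z : ℤ_[p], ‖root z x - 1‖ ≤ ‖x‖ ^ m := by
    intro z
    obtain ⟨-, h2⟩ := hroot z x hx1
    have heq : root z x - 1 =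
        (root z x - (1 - algebraMap ℚ_[p] K (z : ℚ_[p]) * a * x ^ m)) +
        (-(algebraMap ℚ_[p] K (z : ℚ_[p]) * a * x ^ m)) := by ring
    rw [heq]
    refine (IsUltrametricDist.norm_add_le_max _ _).trans (max_le (h2.trans ?_) ?_)
    · calc ‖(m : K) * x ^ (m + 1)‖ = ‖(m : K)‖ * ‖x‖ ^ (m + 1) := by
            rw [norm_mul, norm_pow]
      _ ≤ 1 * (‖x‖ ^ m * ‖x‖) := by rw [pow_succ]; exact mul_le_mul hmK1 le_rfl (by positivity) zero_le_one
      _ ≤ 1 * (‖x‖ ^ m * 1) := by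
            refine mul_le_mul le_rfl (mul_le_mul le_rfl hx1.le (norm_nonneg _) (by positivity)) (by positivity) zero_le_one
      _ = ‖x‖ ^ m := by ring
    · rw [norm_neg, norm_mul, norm_mul, norm_pow]
      calc ‖algebraMap ℚ_[p] K (z : ℚ_[p])‖ * ‖a‖ * ‖x‖ ^ m ≤ 1 * 1 * ‖x‖ ^ m := by
            refine mul_le_mul (mul_le_mul (hcoef z) ha1 (norm_nonneg _) zero_le_one) le_rfl (by positivity) (by positivity)
      _ = ‖x‖ ^ m := by ring
  have hxm_lt1 : ‖x‖ ^ m < 1 := lt_of_le_of_lt hxm1 hx1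
  have hrnorm : ∀ z : ℤ_[p], ‖root z x‖ = 1 := fun z => by
    have := ultra_norm_eq_of_sub_lt (a := root z x) (b := 1)
      (by rw [norm_one]; exact lt_of_le_of_lt (hr1 z) hxm_lt1)
    simpa using this
  have hrne : ∀ z : ℤ_[p], root z x ≠ 0 := fun z => by
    intro h; have := hrnorm z; rw [h, norm_zero] at this; norm_num at this
  -- key distance formula
  have key : ∀ z z' : ℤ_[p],
      ‖x / root z x - x / root z' x‖ = ‖a‖ * ‖x‖ ^ (m + 1) * ‖z - z'‖ := by
    intro z z'
    set r := root z x with hr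
    set r' := root z' x with hr'
    -- ‖r - r'‖ = ‖a‖ ‖x‖^m ‖z - z'‖
    have hpow : r ^ m - r' ^ m =
        algebraMap ℚ_[p] K (((z' - z : ℤ_[p]) : ℚ_[p])) * (a * (m : K) * x ^ m) := by
      obtain ⟨e1, -⟩ := hroot z x hx1
      obtain ⟨e2, -⟩ := hroot z' x hx1
      rw [← hr] at e1; rw [← hr'] at e2
      rw [e1, e2]
      have : ((z' - z : ℤ_[p]) : ℚ_[p]) = (z' : ℚ_[p]) - (z : ℚ_[p]) := by push_cast; ring
      rw [this, map_sub]
      ring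
    have hgeom : (∑ i ∈ Finset.range m, r ^ i * r' ^ (m - 1 - i)) * (r - r') =
        r ^ m - r' ^ m := geom_sum₂_mul r r' m
    have hpowsub1 : ∀ n : ℕ, ∀ y : ℤ_[p], ‖root y x ^ n - 1‖ ≤ ‖x‖ ^ m := by
      intro n y
      induction n with
      | zero => simpa using by positivity
      | succ k ih =>
        rw [pow_succ]
        refine ultra_mul_sub_one ?_ ih (hr1 y)
        rw [norm_pow, hrnorm y, one_pow]
    have hsum : ‖(∑ i ∈ Finset.range m, r ^ i * r' ^ (m - 1 - i))‖ = ‖(m : K)‖ := by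
      refine ultra_norm_eq_of_sub_lt ?_
      have : (∑ i ∈ Finset.range m, r ^ i * r' ^ (m - 1 - i)) - (m : K) =
          ∑ i ∈ Finset.range m, (r ^ i * r' ^ (m - 1 - i) - 1) := by
        rw [Finset.sum_sub_distrib]
        simp [Finset.card_range]
      rw [this]
      refine lt_of_le_of_lt
        (IsUltrametricDist.norm_sum_le_of_forall_le_of_nonneg (by positivity) ?_)
        (lt_of_le_of_lt hxm1 hxmK)
      intro i _
      refine ultra_mul_sub_one ?_ (hpowsub1 i z) (hpowsub1 (m - 1 - i) z')
      rw [norm_pow, hrnorm z, one_pow]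
    have hsub : ‖r - r'‖ = ‖a‖ * ‖x‖ ^ m * ‖z - z'‖ := by
      have h1 : ‖(m : K)‖ * ‖r - r'‖ = ‖r ^ m - r' ^ m‖ := by
        rw [← hgeom, norm_mul, hsum]
      have h2 : ‖r ^ m - r' ^ m‖ = ‖z - z'‖ * (‖a‖ * ‖(m : K)‖ * ‖x‖ ^ m) := by
        rw [hpow, norm_mul, hext]
        rw [show ((z' - z : ℤ_[p]) : ℚ_[p]) = ((z' - z : ℤ_[p]) : ℚ_[p]) from rfl]
        rw [PadicInt.padic_norm_e_of_padicInt, norm_sub_rev]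
        rw [norm_mul, norm_mul, norm_pow]
      have := h1.trans h2
      field_simp at this ⊢
      nlinarith [norm_nonneg (r - r'), hmK]
    -- conclude
    have hdiv : x / r - x / r' = x * (r' - r) / (r * r') := by
      rw [div_sub_div _ _ (hrne z) (hrne z')]
      ring
    rw [hdiv, norm_div, norm_mul, norm_mul, hrnorm z, hrnorm z', norm_sub_rev, hsub]
    rw [pow_succ]
    ring
  refine ⟨key, fun z z' h => ?_⟩
  have := key z z'
  simp only at h
  rw [h, sub_self, norm_zero] at this
  have hz : ‖z - z'‖ = 0 := by
    have hx' : (0:ℝ) < ‖x‖ ^ (m+1) := by positivity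
    by_contra hne
    have hpos : 0 < ‖z - z'‖ := lt_of_le_of_ne (norm_nonneg _) (Ne.symm hne)
    nlinarith [mul_pos (mul_pos ha0 hx') hpos]
  rwa [norm_eq_zero, sub_eq_zero] at hz
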